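/- Let d ≥ 1 and let t : E^d → [0,∞) be a fixed weight configuration on the nearest-neighbor edges of ℤ^d such that T(0, ℤ^d ∖ [−n,n]^d) → ∞ as n → ∞, where T(x, A) = inf_{y ∈ A} T(x,y). Then for every pair of vertices x, y ∈ ℤ^d there exists a geodesic from x to y: a finite nearest-neighbor path γ from x to y whose passage time T(γ) equals T(x,y). Moreover, γ can be taken to be self-avoiding. -/

import Mathlib

open Filter Classical

/-- Vertices of the `d`-dimensional lattice. -/
abbrev Vtx (d : ℕ) := Fin d → ℤ

/-- ℓ¹-distance on `ℤ^d`. -/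
def dist1 {d : ℕ} (x y : Vtx d) : ℤ := ∑ i, |x i - y i|

/-- `e` is a nearest-neighbor (unordered) edge of `ℤ^d`. -/
def IsNNEdge {d : ℕ} (e : Sym2 (Vtx d)) : Prop :=
  ∃ x y : Vtx d, dist1 x y = 1 ∧ e = s(x, y)

/-- Extend a weight function on nearest-neighbor edges to all unordered pairs by `0`. -/
noncomputable def liftW {d : ℕ} (t : {e : Sym2 (Vtx d) // IsNNEdge e} → ℝ)
    (e : Sym2 (Vtx d)) : ℝ :=
  if h : IsNNEdge e then t ⟨e, h⟩ else 0

/-- `p` is a nearest-neighbor path of `n` steps from `x` to `y`. -/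
def IsPath {d : ℕ} (n : ℕ) (p : ℕ → Vtx d) (x y : Vtx d) : Prop :=
  p 0 = x ∧ p n = y ∧ ∀ i : ℕ, i < n → dist1 (p i) (p (i + 1)) = 1

/-- The passage time of the first `n` steps of `p`. -/
def pathTime {d : ℕ} (w : Sym2 (Vtx d) → ℝ) (n : ℕ) (p : ℕ → Vtx d) : ℝ :=
  ∑ i ∈ Finset.range n, w s(p i, p (i + 1))

/-- The (first-)passage time `T(x,y)`. -/
noncomputable def PT {d : ℕ} (w : Sym2 (Vtx d) → ℝ) (x y : Vtx d) : ℝ :=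
  sInf {r : ℝ | ∃ (n : ℕ) (p : ℕ → Vtx d), IsPath n p x y ∧ r = pathTime w n p}

/-- A single lattice step. -/
def stepV (d : ℕ) (sb : Fin d × Bool) : Vtx d :=
  fun j => if j = sb.1 then (if sb.2 then 1 else -1) else 0

def walkFrom {d : ℕ} (x : Vtx d) (s : ℕ → Fin d × Bool) : ℕ → Vtx d
  | 0 => x
  | k+1 => walkFrom x s k + stepV d (s k)

lemma dist1_nonneg {d : ℕ} (x y : Vtx d) : 0 ≤ dist1 x y :=
  Finset.sum_nonneg fun _ _ => abs_nonneg _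

lemma dist1_eq_zero {d : ℕ} {x y : Vtx d} (h : dist1 x y = 0) : x = y := by
  funext i
  have := (Finset.sum_eq_zero_iff_of_nonneg (fun i _ => abs_nonneg (x i - y i))).1 h i
    (Finset.mem_univ i)
  have := abs_eq_zero.1 this
  omega

lemma dist1_step {d : ℕ} (x : Vtx d) (sb : Fin d × Bool) :
    dist1 x (x + stepV d sb) = 1 := by
  unfold dist1
  rw [Finset.sum_eq_single sb.1]
  · simp [stepV]
    cases sb.2 <;> simp
  · intro j _ hj
    simp [stepV, hj]
  · simp

lemma unitstep {d : ℕ} {u v : Vtx d} (h : dist1 u v = 1) :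
    ∃ sb : Fin d × Bool, v = u + stepV d sb := by
  have hex : ∃ i : Fin d, |u i - v i| ≠ 0 := by
    by_contra hc
    push_neg at hc
    have : dist1 u v = 0 := Finset.sum_eq_zero fun i _ => hc i
    omega
  obtain ⟨i, hi⟩ := hex
  have h1 : |u i - v i| ≤ 1 := by
    rw [← h]
    exact Finset.single_le_sum (fun j _ => abs_nonneg (u j - v j)) (Finset.mem_univ i)
  have h2 : (1:ℤ) ≤ |u i - v i| := by
    have := abs_nonneg (u i - v i); omega
  have h3 : |u i - v i| = 1 := le_antisymm h1 h2
  have h4 : ∀ j, j ≠ i → u j = v j := by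
    intro j hj
    have hrest : ∑ k ∈ Finset.univ.erase i, |u k - v k| = 0 := by
      have := Finset.add_sum_erase Finset.univ (fun k => |u k - v k|) (Finset.mem_univ i)
      unfold dist1 at h
      linarith [h3]
    have := (Finset.sum_eq_zero_iff_of_nonneg (fun k _ => abs_nonneg (u k - v k))).1 hrest j
      (Finset.mem_erase.2 ⟨hj, Finset.mem_univ j⟩)
    have := abs_eq_zero.1 this
    omega
  have habs := (abs_eq (by norm_num : (0:ℤ) ≤ 1)).1 h3
  by_cases hb : v i = u i + 1
  · refine ⟨(i, true), ?_⟩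
    funext j
    by_cases hj : j = i
    · subst hj; simp [Pi.add_apply, stepV, hb]
    · simp [Pi.add_apply, stepV, hj, h4 j hj]
  · have hv : v i = u i - 1 := by omega
    refine ⟨(i, false), ?_⟩
    funext j
    by_cases hj : j = i
    · subst hj; simp [Pi.add_apply, stepV, hv]; ring
    · simp [Pi.add_apply, stepV, hj, h4 j hj]
/-- concatenation of paths -/
def pcat {d : ℕ} (n : ℕ) (p q : ℕ → Vtx d) : ℕ → Vtx d :=
  fun k => if k < n then p k else q (k - n)

lemma pcat_eq_left {d : ℕ} {n : ℕ} {p q : ℕ → Vtx d} {x z : Vtx d}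
    (hp : IsPath n p x z) (hq0 : q 0 = z) {k : ℕ} (hk : k ≤ n) : pcat n p q k = p k := by
  unfold pcat
  rcases lt_or_eq_of_le hk with h | h
  · simp [h]
  · subst h; simp [hq0, hp.2.1]

lemma pcat_isPath {d : ℕ} {n m : ℕ} {p q : ℕ → Vtx d} {x z y : Vtx d}
    (hp : IsPath n p x z) (hq : IsPath m q z y) : IsPath (n + m) (pcat n p q) x y := by
  refine ⟨?_, ?_, ?_⟩
  · rw [pcat_eq_left hp hq.1 (Nat.zero_le n)]; exact hp.1
  · unfold pcat
    rcases Nat.eq_zero_or_pos m with hm | hm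
    · subst hm
      simp only [Nat.add_zero]
      rw [if_neg (lt_irrefl n)]
      simp [hq.2.1, hq.1]
    · rw [if_neg (by omega)]
      have : n + m - n = m := by omega
      rw [this]; exact hq.2.1
  · intro i hi
    by_cases h : i < n
    · rw [pcat_eq_left hp hq.1 (le_of_lt h), pcat_eq_left hp hq.1 (by omega)]
      exact hp.2.2 i h
    · unfold pcat
      rw [if_neg h, if_neg (by omega)]
      have h1 : i + 1 - n = (i - n) + 1 := by omega
      rw [h1]
      exact hq.2.2 (i - n) (by omega)

lemma pcat_time {d : ℕ} (w : Sym2 (Vtx d) → ℝ) {n m : ℕ} {p q : ℕ → Vtx d} {x z y : Vtx d}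
    (hp : IsPath n p x z) (hq : IsPath m q z y) :
    pathTime w (n + m) (pcat n p q) = pathTime w n p + pathTime w m q := by
  unfold pathTime
  rw [Finset.range_eq_Ico, ← Finset.sum_Ico_consecutive _ (Nat.zero_le n) (Nat.le_add_right n m)]
  congr 1
  · rw [← Finset.range_eq_Ico]
    refine Finset.sum_congr rfl fun k hk => ?_
    rw [Finset.mem_range] at hk
    rw [pcat_eq_left hp hq.1 (le_of_lt hk), pcat_eq_left hp hq.1 (by omega)]
  · rw [Finset.sum_Ico_eq_sum_range]
    have : n + m - n = m := by omega
    rw [this]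
    refine Finset.sum_congr rfl fun k hk => ?_
    unfold pcat
    have h1 : ¬ (n + k < n) := by omega
    have h2 : ¬ (n + k + 1 < n) := by omega
    rw [if_neg h1, if_neg h2]
    have e1 : n + k - n = k := by omega
    have e2 : n + k + 1 - n = k + 1 := by omega
    rw [e1, e2]

lemma isPath_prefix {d : ℕ} {n : ℕ} {p : ℕ → Vtx d} {x y : Vtx d}
    (hp : IsPath n p x y) {k : ℕ} (hk : k ≤ n) : IsPath k p x (p k) :=
  ⟨hp.1, rfl, fun i hi => hp.2.2 i (by omega)⟩

lemma pathTime_nonneg {d : ℕ} {w : Sym2 (Vtx d) → ℝ} (hw : ∀ e, 0 ≤ w e)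
    (n : ℕ) (p : ℕ → Vtx d) : 0 ≤ pathTime w n p :=
  Finset.sum_nonneg fun _ _ => hw _

lemma pathTime_mono {d : ℕ} {w : Sym2 (Vtx d) → ℝ} (hw : ∀ e, 0 ≤ w e)
    {k n : ℕ} (hk : k ≤ n) (p : ℕ → Vtx d) : pathTime w k p ≤ pathTime w n p :=
  Finset.sum_le_sum_of_subset_of_nonneg (Finset.range_subset_range.2 hk) (fun _ _ _ => hw _)

lemma exists_path {d : ℕ} (x y : Vtx d) : ∃ n p, IsPath n p x y := by
  generalize hD : (dist1 x y).toNat = D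
  induction D using Nat.strong_induction_on generalizing x with
  | _ D ih =>
    rcases Nat.eq_zero_or_pos D with h0 | h0
    · subst h0
      have : dist1 x y = 0 := by have := dist1_nonneg x y; omega
      have hxy := dist1_eq_zero this
      exact ⟨0, fun _ => x, rfl, hxy, fun i hi => by omega⟩
    · have hne : dist1 x y ≠ 0 := by omega
      have hex : ∃ i : Fin d, x i ≠ y i := by
        by_contra hc
        push_neg at hc
        exact hne (by unfold dist1; exact Finset.sum_eq_zero fun i _ => by rw [hc i]; simp)
      obtain ⟨i, hi⟩ := hex
      set x' : Vtx d := x + stepV d (i, decide (x i < y i)) with hx'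
      have hd1 : dist1 x x' = 1 := dist1_step x _
      have key : ∀ j, |x' j - y j| = |x j - y j| + if j = i then (-1:ℤ) else 0 := by
        intro j
        by_cases hj : j = i
        · subst hj
          have hxi' : x' j = x j + (if x j < y j then 1 else -1) := by
            by_cases h : x j < y j <;> simp [hx', Pi.add_apply, stepV, h]
          rw [hxi', if_pos rfl]
          rcases lt_trichotomy (x j) (y j) with h | h | h
          · rw [if_pos h, abs_of_nonpos (by omega), abs_of_nonpos (by omega)]; ring
          · exact absurd h hi
          · rw [if_neg (by omega), abs_of_nonneg (by omega), abs_of_nonneg (by omega)]; ring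
        · have : x' j = x j := by simp [hx', Pi.add_apply, stepV, hj]
          rw [this, if_neg hj]; ring
      have hdec : dist1 x' y = dist1 x y - 1 := by
        unfold dist1
        calc ∑ j, |x' j - y j| = ∑ j, (|x j - y j| + if j = i then (-1:ℤ) else 0) :=
              Finset.sum_congr rfl (fun j _ => key j)
          _ = (∑ j, |x j - y j|) + ∑ j, (if j = i then (-1:ℤ) else 0) := Finset.sum_add_distrib
          _ = (∑ j, |x j - y j|) - 1 := by rw [Finset.sum_ite_eq' Finset.univ i (fun _ => (-1:ℤ))]; simp only [Finset.mem_univ, if_true]; ring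
      obtain ⟨n, p, hp⟩ := ih (D - 1) (by omega) x' (by omega)
      have hstep : IsPath 1 (fun k => if k < 1 then x else x') x x' := by
        refine ⟨by simp, by simp, fun j hj => ?_⟩
        have : j = 0 := by omega
        subst this
        simpa using hd1
      exact ⟨1 + n, pcat 1 _ p, pcat_isPath hstep hp⟩
lemma removeLoop {d : ℕ} {w : Sym2 (Vtx d) → ℝ} (hw : ∀ e, 0 ≤ w e)
    {n : ℕ} {p : ℕ → Vtx d} {x y : Vtx d} (hp : IsPath n p x y)
    {i j : ℕ} (hij : i < j) (hjn : j ≤ n) (heq : p i = p j) :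
    ∃ q, IsPath (n - (j - i)) q x y ∧
      pathTime w (n - (j - i)) q ≤ pathTime w n p ∧
      ∀ k ≤ n - (j - i), ∃ k' ≤ n, q k = p k' := by
  set m := n - (j - i) with hm
  have him : i ≤ m := by omega
  set q : ℕ → Vtx d := fun k => if k ≤ i then p k else p (k + (j - i)) with hq
  have hqval : ∀ k, i < k → q k = p (k + (j - i)) := by
    intro k hk; simp only [hq]; rw [if_neg (by omega)]
  have hqval' : ∀ k, k ≤ i → q k = p k := by
    intro k hk; simp only [hq]; rw [if_pos hk]
  have hpath : IsPath m q x y := by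
    refine ⟨?_, ?_, ?_⟩
    · rw [hqval' 0 (Nat.zero_le i)]; exact hp.1
    · rcases eq_or_lt_of_le him with h | h
      · rw [hqval' m (le_of_eq h.symm)]
        have : m = i := h.symm
        have hnj : n = j := by omega
        rw [← this] at heq
        rw [heq, ← hnj]; exact hp.2.1
      · rw [hqval m h]
        have : m + (j - i) = n := by omega
        rw [this]; exact hp.2.1
    · intro k hk
      by_cases h1 : k + 1 ≤ i
      · rw [hqval' k (by omega), hqval' (k+1) h1]
        exact hp.2.2 k (by omega)
      · by_cases h2 : k ≤ i
        · have hki : k = i := by omega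
          rw [hqval' k h2, hqval (k+1) (by omega), hki, heq]
          have : i + 1 + (j - i) = j + 1 := by omega
          rw [this]
          exact hp.2.2 j (by omega)
        · rw [hqval k (by omega), hqval (k+1) (by omega)]
          have : k + 1 + (j - i) = (k + (j - i)) + 1 := by omega
          rw [this]
          exact hp.2.2 (k + (j - i)) (by omega)
  refine ⟨q, hpath, ?_, ?_⟩
  · unfold pathTime
    have hsplit : ∑ k ∈ Finset.range m, w s(q k, q (k+1))
        = (∑ k ∈ Finset.range i, w s(p k, p (k+1)))
          + ∑ k ∈ Finset.Ico j n, w s(p k, p (k+1)) := by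
      rw [Finset.range_eq_Ico, ← Finset.sum_Ico_consecutive _ (Nat.zero_le i) him]
      congr 1
      · rw [← Finset.range_eq_Ico]
        refine Finset.sum_congr rfl fun k hk => ?_
        rw [Finset.mem_range] at hk
        rw [hqval' k (by omega), hqval' (k+1) (by omega)]
      · rw [Finset.sum_Ico_eq_sum_range, Finset.sum_Ico_eq_sum_range]
        have hmi : m - i = n - j := by omega
        rw [hmi]
        refine Finset.sum_congr rfl fun k hk => ?_
        rw [Finset.mem_range] at hk
        rcases Nat.eq_zero_or_pos k with h0 | h0
        · subst h0
          simp only [Nat.add_zero]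
          rw [hqval' i le_rfl, hqval (i+1) (by omega), heq]
          have e1 : i + 1 + (j - i) = j + 1 := by omega
          rw [e1]
        · rw [hqval (i+k) (by omega), hqval (i+k+1) (by omega)]
          have e1 : i + k + (j - i) = j + k := by omega
          have e2 : i + k + 1 + (j - i) = j + k + 1 := by omega
          rw [e1, e2]
    rw [hsplit]
    have hdisj : Disjoint (Finset.range i) (Finset.Ico j n) := by
      rw [Finset.range_eq_Ico]
      refine Finset.Ico_disjoint_Ico_consecutive 0 i n |>.mono_right ?_
      exact Finset.Ico_subset_Ico (by omega) le_rfl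
    rw [← Finset.sum_union hdisj]
    refine Finset.sum_le_sum_of_subset_of_nonneg ?_ (fun _ _ _ => hw _)
    intro k hk
    rw [Finset.mem_union, Finset.mem_range, Finset.mem_Ico] at hk
    rw [Finset.mem_range]
    omega
  · intro k hk
    by_cases h : k ≤ i
    · exact ⟨k, by omega, (hqval' k h).symm ▸ rfl⟩
    · exact ⟨k + (j - i), by omega, by rw [hqval k (by omega)]⟩

lemma eraseLoops {d : ℕ} {w : Sym2 (Vtx d) → ℝ} (hw : ∀ e, 0 ≤ w e) :
    ∀ n : ℕ, ∀ (p : ℕ → Vtx d) (x y : Vtx d), IsPath n p x y →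
    ∃ m q, m ≤ n ∧ IsPath m q x y ∧ pathTime w m q ≤ pathTime w n p ∧
      (∀ k ≤ m, ∃ k' ≤ n, q k = p k') ∧
      (∀ a b, a ≤ m → b ≤ m → q a = q b → a = b) := by
  intro n
  induction n using Nat.strong_induction_on with
  | _ n ih =>
    intro p x y hp
    by_cases hsa : ∀ a b, a ≤ n → b ≤ n → p a = p b → a = b
    · exact ⟨n, p, le_rfl, hp, le_rfl, fun k hk => ⟨k, hk, rfl⟩, hsa⟩
    · push_neg at hsa
      obtain ⟨a, b, ha, hb, heq, hab⟩ := hsa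
      -- wlog a < b
      have hmain : ∀ i j : ℕ, i < j → j ≤ n → p i = p j →
          ∃ m q, m ≤ n ∧ IsPath m q x y ∧ pathTime w m q ≤ pathTime w n p ∧
            (∀ k ≤ m, ∃ k' ≤ n, q k = p k') ∧
            (∀ a b, a ≤ m → b ≤ m → q a = q b → a = b) := by
        intro i j hij hjn hpij
        obtain ⟨q, hq, hqt, hqr⟩ := removeLoop hw hp hij hjn hpij
        have hlt : n - (j - i) < n := by omega
        obtain ⟨m, q', hm, hq', hq't, hq'r, hq'sa⟩ := ih (n - (j - i)) hlt q x y hq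
        refine ⟨m, q', by omega, hq', le_trans hq't hqt, ?_, hq'sa⟩
        intro k hk
        obtain ⟨k', hk', hqk⟩ := hq'r k hk
        obtain ⟨k'', hk'', hqk'⟩ := hqr k' hk'
        exact ⟨k'', hk'', hqk.trans hqk'⟩
      rcases lt_or_gt_of_ne hab with h | h
      · exact hmain a b h hb heq
      · exact hmain b a h ha heq.symm
lemma walk_encode {d : ℕ} (hd : 1 ≤ d) {n N : ℕ} (hnN : n ≤ N) {p : ℕ → Vtx d} {x y : Vtx d}
    (hp : IsPath n p x y) :
    ∃ σ : Fin N → Fin d × Bool,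
      ∀ k ≤ n, walkFrom x (fun k => if h : k < N then σ ⟨k, h⟩ else (⟨0, hd⟩, true)) k = p k := by
  set s : ℕ → Fin d × Bool := fun k =>
    if h : k < n then Classical.choose (unitstep (hp.2.2 k h)) else (⟨0, hd⟩, true) with hs
  refine ⟨fun k => s k, ?_⟩
  set sh : ℕ → Fin d × Bool :=
    fun k => if h : k < N then (fun k : Fin N => s k) ⟨k, h⟩ else (⟨0, hd⟩, true) with hsh
  have hsh' : ∀ k, k < n → sh k = s k := by
    intro k hk; simp only [hsh]; rw [dif_pos (by omega)]
  intro k hk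
  induction k with
  | zero => exact hp.1.symm
  | succ k ihk =>
    have hkn : k < n := by omega
    show walkFrom x sh k + stepV d (sh k) = p (k+1)
    rw [ihk (by omega), hsh' k hkn]
    have hspec := Classical.choose_spec (unitstep (hp.2.2 k hkn))
    simp only [hs]
    rw [dif_pos hkn]
    exact hspec.symm

def Pset {d : ℕ} (w : Sym2 (Vtx d) → ℝ) (a b : Vtx d) : Set ℝ :=
  {r : ℝ | ∃ (n : ℕ) (p : ℕ → Vtx d), IsPath n p a b ∧ r = pathTime w n p}

lemma PT_eq {d : ℕ} (w : Sym2 (Vtx d) → ℝ) (a b : Vtx d) : PT w a b = sInf (Pset w a b) := rfl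

lemma Pset_nonempty {d : ℕ} (w : Sym2 (Vtx d) → ℝ) (a b : Vtx d) : (Pset w a b).Nonempty := by
  obtain ⟨n, p, hp⟩ := exists_path a b
  exact ⟨pathTime w n p, n, p, hp, rfl⟩

lemma Pset_bddBelow {d : ℕ} {w : Sym2 (Vtx d) → ℝ} (hw : ∀ e, 0 ≤ w e) (a b : Vtx d) :
    BddBelow (Pset w a b) := by
  refine ⟨0, fun r hr => ?_⟩
  obtain ⟨n, p, hp, rfl⟩ := hr
  exact pathTime_nonneg hw n p

lemma PT_le {d : ℕ} {w : Sym2 (Vtx d) → ℝ} (hw : ∀ e, 0 ≤ w e) {a b : Vtx d}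
    {n : ℕ} {p : ℕ → Vtx d} (hp : IsPath n p a b) : PT w a b ≤ pathTime w n p := by
  rw [PT_eq]
  exact csInf_le (Pset_bddBelow hw a b) ⟨n, p, hp, rfl⟩

lemma PT_nonneg {d : ℕ} {w : Sym2 (Vtx d) → ℝ} (hw : ∀ e, 0 ≤ w e) (a b : Vtx d) :
    0 ≤ PT w a b := by
  rw [PT_eq]
  exact le_csInf (Pset_nonempty w a b) fun r hr => by
    obtain ⟨n, p, hp, rfl⟩ := hr; exact pathTime_nonneg hw n p

lemma PT_exists_lt {d : ℕ} (w : Sym2 (Vtx d) → ℝ) (a b : Vtx d) {c : ℝ} (hc : PT w a b < c) :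
    ∃ (n : ℕ) (p : ℕ → Vtx d), IsPath n p a b ∧ pathTime w n p < c := by
  rw [PT_eq] at hc
  obtain ⟨r, hrS, hrlt⟩ := exists_lt_of_csInf_lt (Pset_nonempty w a b) hc
  obtain ⟨n, p, hp, rfl⟩ := hrS
  exact ⟨n, p, hp, hrlt⟩
/-- if the weight configuration satisfies
`T(0, ℤ^d ∖ [−n,n]^d) → ∞`, then any two vertices are joined by a (self-avoiding)
geodesic. -/
theorem stmt14 (d : ℕ) (hd : 1 ≤ d)
    (t : {e : Sym2 (Vtx d) // IsNNEdge e} → ℝ) (hnn : ∀ e, 0 ≤ t e)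
    (hT : Tendsto (fun n : ℕ =>
        sInf {r : ℝ | ∃ y : Vtx d, (∃ i, (n : ℤ) < |y i|) ∧ r = PT (liftW t) 0 y})
      atTop atTop) :
    ∀ x y : Vtx d, ∃ (n : ℕ) (p : ℕ → Vtx d), IsPath n p x y ∧
      pathTime (liftW t) n p = PT (liftW t) x y ∧
      ∀ i j : ℕ, i ≤ n → j ≤ n → p i = p j → i = j := by
  classical
  set w : Sym2 (Vtx d) → ℝ := liftW t with hwdef
  have hw : ∀ e, 0 ≤ w e := by
    intro e
    simp only [hwdef, liftW]
    split
    · exact hnn _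
    · exact le_rfl
  intro x y
  -- a near-optimal path from 0 to x
  obtain ⟨n0, p0, hp0, hp0t⟩ := PT_exists_lt w 0 x (lt_add_one _)
  -- choose M from the tendsto hypothesis
  set C : ℝ := PT w 0 x + PT w x y + 2 with hC
  obtain ⟨M, hM⟩ := (hT.eventually (eventually_gt_atTop C)).exists
  -- near-optimal paths from x to y stay in the box [-M, M]^d
  have hbox : ∀ (n : ℕ) (p : ℕ → Vtx d), IsPath n p x y → pathTime w n p < PT w x y + 1 →
      ∀ k ≤ n, ∀ i, |p k i| ≤ (M : ℤ) := by
    intro n p hp hpt k hk i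
    by_contra hout
    push_neg at hout
    have hbddA : BddBelow {r : ℝ | ∃ y' : Vtx d, (∃ i, (M : ℤ) < |y' i|) ∧ r = PT w 0 y'} := by
      refine ⟨0, fun r hr => ?_⟩
      obtain ⟨y', _, rfl⟩ := hr
      exact PT_nonneg hw 0 y'
    have h1 : sInf {r : ℝ | ∃ y' : Vtx d, (∃ i, (M : ℤ) < |y' i|) ∧ r = PT w 0 y'}
        ≤ PT w 0 (p k) := csInf_le hbddA ⟨p k, ⟨i, hout⟩, rfl⟩
    have h2 : PT w 0 (p k) ≤ pathTime w n0 p0 + pathTime w k p := by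
      have hcat := pcat_isPath hp0 (isPath_prefix hp hk)
      have hct := pcat_time w hp0 (isPath_prefix hp hk)
      calc PT w 0 (p k) ≤ pathTime w (n0 + k) (pcat n0 p0 p) := PT_le hw hcat
        _ = _ := hct
    have h3 : pathTime w k p ≤ pathTime w n p := pathTime_mono hw hk p
    have := hM
    simp only [hC] at this
    linarith
  -- the box and length bound
  set Box : Finset (Vtx d) := Finset.Icc (fun _ => -(M : ℤ)) (fun _ => (M : ℤ)) with hBox
  set N : ℕ := Box.card with hN
  set S' : Set ℝ := {r : ℝ | ∃ n, n ≤ N ∧ ∃ p : ℕ → Vtx d, IsPath n p x y ∧ r = pathTime w n p}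
    with hS'
  have hS'sub : S' ⊆ Pset w x y := by
    rintro r ⟨n, hnN, p, hp, rfl⟩
    exact ⟨n, p, hp, rfl⟩
  have hbddS' : BddBelow S' := (Pset_bddBelow hw x y).mono hS'sub
  -- key reduction
  have hkey : ∀ (n : ℕ) (p : ℕ → Vtx d), IsPath n p x y → pathTime w n p < PT w x y + 1 →
      ∃ r' ∈ S', r' ≤ pathTime w n p := by
    intro n p hp hpt
    obtain ⟨m, q, hmn, hq, hqt, hqr, hqsa⟩ := eraseLoops hw n p x y hp
    have hmN : m + 1 ≤ N := by
      have hmem : ∀ a ∈ Finset.range (m + 1), q a ∈ Box := by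
        intro a ha
        rw [Finset.mem_range] at ha
        obtain ⟨k', hk', hqk⟩ := hqr a (by omega)
        have hb := fun i => hbox n p hp hpt k' hk' i
        rw [hBox, Finset.mem_Icc]
        constructor <;> (intro i; simp only [hqk])
        · have := (abs_le.mp (hb i)).1; exact this
        · exact (abs_le.mp (hb i)).2
      have hinj : Set.InjOn q (Finset.range (m + 1)) := by
        intro a ha b hb hab
        rw [Finset.coe_range, Set.mem_Iio] at ha hb
        exact hqsa a b (by omega) (by omega) hab
      have := Finset.card_le_card_of_injOn q hmem hinj
      simpa using this
    exact ⟨pathTime w m q, ⟨m, by omega, q, hq, rfl⟩, hqt⟩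
  -- S' is nonempty
  have hS'ne : S'.Nonempty := by
    obtain ⟨n, p, hp, hpt⟩ := PT_exists_lt w x y (lt_add_one _)
    obtain ⟨r', hr'S', _⟩ := hkey n p hp hpt
    exact ⟨r', hr'S'⟩
  -- sInf S' = PT w x y
  have hge : PT w x y ≤ sInf S' :=
    le_csInf hS'ne fun r hr => by
      rw [PT_eq]; exact csInf_le (Pset_bddBelow hw x y) (hS'sub hr)
  have hle : sInf S' ≤ PT w x y := by
    refine le_of_forall_pos_le_add fun ε hε => ?_
    have hδ : 0 < min ε 1 := lt_min hε one_pos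
    obtain ⟨n, p, hp, hpt⟩ := PT_exists_lt w x y (lt_add_of_pos_right _ hδ)
    have hpt1 : pathTime w n p < PT w x y + 1 :=
      lt_of_lt_of_le hpt (by have := min_le_right ε 1; linarith)
    obtain ⟨r', hr'S', hr'le⟩ := hkey n p hp hpt1
    have := csInf_le hbddS' hr'S'
    have := min_le_left ε 1
    linarith
  have hinf_eq : sInf S' = PT w x y := le_antisymm hle hge
  -- S' is finite
  set G : Fin (N + 1) × (Fin N → Fin d × Bool) → ℝ := fun z =>
    pathTime w z.1 (walkFrom x (fun k => if h : k < N then z.2 ⟨k, h⟩ else (⟨0, hd⟩, true)))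
    with hG
  have hsub : S' ⊆ Set.range G := by
    rintro r ⟨n, hnN, p, hp, rfl⟩
    obtain ⟨σ, hσ⟩ := walk_encode hd hnN hp
    refine ⟨(⟨n, by omega⟩, σ), ?_⟩
    simp only [hG]
    refine Finset.sum_congr rfl fun k hk => ?_
    rw [Finset.mem_range] at hk
    rw [hσ k (by omega), hσ (k + 1) (by omega)]
  have hfin : S'.Finite := (Set.finite_range G).subset hsub
  have hmem : PT w x y ∈ S' := by
    rw [← hinf_eq]
    exact hS'ne.csInf_mem hfin
  obtain ⟨n2, hn2N, p2, hp2, hp2t⟩ := hmem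
  -- minimal length geodesic
  have hex : ∃ n : ℕ, ∃ p : ℕ → Vtx d, IsPath n p x y ∧ pathTime w n p = PT w x y :=
    ⟨n2, p2, hp2, hp2t.symm⟩
  set n1 := Nat.find hex with hn1
  obtain ⟨p, hp, hpt⟩ := Nat.find_spec hex
  refine ⟨n1, p, hp, hpt, ?_⟩
  by_contra hsa
  push_neg at hsa
  obtain ⟨a, b, ha, hb, heq, hab⟩ := hsa
  have hmain : ∀ i j : ℕ, i < j → j ≤ n1 → p i = p j → False := by
    intro i j hij hjn heqij
    obtain ⟨q, hq, hqt, _⟩ := removeLoop hw hp hij hjn heqij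
    have hge' : PT w x y ≤ pathTime w (n1 - (j - i)) q := PT_le hw hq
    have heqt : pathTime w (n1 - (j - i)) q = PT w x y := le_antisymm (hpt ▸ hqt) hge'
    have hlt : n1 - (j - i) < n1 := by omega
    exact Nat.find_min hex hlt ⟨q, hq, heqt⟩
  rcases lt_or_gt_of_ne hab with h | h
  · exact hmain a b h hb heq
  · exact hmain b a h ha heq.symm
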